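/- Let F₀ be a real number with 0 < F₀ ≤ 1 and define the concatenated error-correction fidelity sequence by F_n = F_{n-1}·√(3 - 2·F_{n-1}) for n ≥ 1. Then F_n tends to 1 as n tends to infinity. -/

import Mathlib

open Filter

/-- The concatenated error-correction fidelity sequence tends to `1`. -/
theorem concatenated_ec_tendsto_one (F : ℕ → ℝ)
    (h0 : 0 < F 0) (h1 : F 0 ≤ 1)
    (hrec : ∀ n : ℕ, F (n + 1) = F n * Real.sqrt (3 - 2 * F n)) :
    Tendsto F atTop (nhds 1) := by
  have hmem : ∀ n, 0 < F n ∧ F n ≤ 1 := by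
    intro n
    induction n with
    | zero => exact ⟨h0, h1⟩
    | succ n ih =>
      obtain ⟨hp, hle⟩ := ih
      rw [hrec n]
      constructor
      · have : (0:ℝ) < Real.sqrt (3 - 2 * F n) := Real.sqrt_pos.2 (by linarith)
        positivity
      · have hx : F n * Real.sqrt (3 - 2 * F n) = Real.sqrt ((F n)^2 * (3 - 2 * F n)) := by
          rw [Real.sqrt_mul (by positivity : (0:ℝ) ≤ (F n)^2), Real.sqrt_sq hp.le]
        rw [hx]
        have : (F n)^2 * (3 - 2 * F n) ≤ 1 := by nlinarith [sq_nonneg (F n - 1), hp.le]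
        calc Real.sqrt ((F n)^2 * (3 - 2 * F n)) ≤ Real.sqrt 1 := Real.sqrt_le_sqrt this
          _ = 1 := Real.sqrt_one
  have hmono : Monotone F := by
    apply monotone_nat_of_le_succ
    intro n
    obtain ⟨hp, hle⟩ := hmem n
    rw [hrec n]
    have h1' : (1:ℝ) ≤ Real.sqrt (3 - 2 * F n) := by
      rw [show (1:ℝ) = Real.sqrt 1 by simp]
      exact Real.sqrt_le_sqrt (by linarith)
    nlinarith
  have hbdd : BddAbove (Set.range F) := ⟨1, by rintro _ ⟨n, rfl⟩; exact (hmem n).2⟩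
  set L := ⨆ n, F n with hLdef
  have hL : Tendsto F atTop (nhds L) := tendsto_atTop_ciSup hmono hbdd
  have hL0 : 0 < L := lt_of_lt_of_le h0 (le_ciSup hbdd 0)
  have hL1 : L ≤ 1 := ciSup_le fun n => (hmem n).2
  -- limit equation
  have hcont : Tendsto (fun x : ℝ => x * Real.sqrt (3 - 2 * x)) (nhds L)
      (nhds (L * Real.sqrt (3 - 2 * L))) := by
    apply Tendsto.mul tendsto_id
    exact (Real.continuous_sqrt.tendsto _).comp (by
      have : Continuous (fun x : ℝ => 3 - 2 * x) := by continuity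
      exact this.tendsto L)
  have h2 : Tendsto (fun n => F (n + 1)) atTop (nhds (L * Real.sqrt (3 - 2 * L))) := by
    have := hcont.comp hL
    simpa [Function.comp_def, hrec] using this
  have h3 : Tendsto (fun n => F (n + 1)) atTop (nhds L) :=
    hL.comp (tendsto_add_atTop_nat 1)
  have heq : L = L * Real.sqrt (3 - 2 * L) := tendsto_nhds_unique h3 h2
  have hs : Real.sqrt (3 - 2 * L) = 1 := by
    have h' : L * Real.sqrt (3 - 2 * L) = L * 1 := by linarith
    exact mul_left_cancel₀ (ne_of_gt hL0) h'
  have hL' : L = 1 := by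
    have h9 : 3 - 2 * L = 1 := by
      have := Real.sqrt_eq_one.mp hs
      linarith [this]
    linarith
  rwa [hL'] at hL
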